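/- arXiv:2405.08432 — 2 statements merged into one kernel-verified Lean document; each statement's English description precedes it below -/
import Mathlib

section
/- Let X be a finite poset with Alexandroff topology and k a field. Every injective object J in the category of sheaves of k-vector spaces on X decomposes as a direct sum J ≅ ⊕_{x∈X} J(x) ⊗_k k_{C_x}, where J(x) = Hom(k_{{x}}, J) and k_{C_x} is the constant sheaf k supported on the closure C_x = {y : y ≤ x}. -/
/-- A sheaf of `k`-modules on a finite poset `X` (with its Alexandroff topology), given by
its stalks and the transition (restriction-to-smaller-open / generization) maps. -/
structure PSheaf (X : Type) [Preorder X] (k : Type) [CommRing k] where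
  stalk : X → Type
  [acg : ∀ x, AddCommGroup (stalk x)]
  [mod : ∀ x, Module k (stalk x)]
  res : ∀ {x y : X}, x ≤ y → (stalk x →ₗ[k] stalk y)
  res_refl : ∀ x : X, res (le_refl x) = LinearMap.id
  res_comp : ∀ {x y z : X} (hxy : x ≤ y) (hyz : y ≤ z),
    (res hyz).comp (res hxy) = res (hxy.trans hyz)

attribute [instance] PSheaf.acg PSheaf.mod

/-- A morphism of sheaves on a finite poset: componentwise linear maps commuting with the
transition maps. -/
structure PHom {X : Type} [Preorder X] {k : Type} [CommRing k] (F G : PSheaf X k) where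
  app : ∀ x, F.stalk x →ₗ[k] G.stalk x
  natural : ∀ {x y : X} (h : x ≤ y), (G.res h).comp (app x) = (app y).comp (F.res h)

/-- `J` is an injective object of the category of sheaves of `k`-modules on `X`: every
morphism to `J` extends along every monomorphism (= stalkwise injective morphism). -/
def IsInjectiveSheaf {X : Type} [Preorder X] {k : Type} [CommRing k] (J : PSheaf X k) :
    Prop :=
  ∀ (F G : PSheaf X k) (ι : PHom F G), (∀ x, Function.Injective (ι.app x)) →
    ∀ f : PHom F J, ∃ g : PHom G J, ∀ x, (g.app x).comp (ι.app x) = f.app x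

/-- `J(x) = Hom(k_{{x}}, J)`: the sections of the stalk `J_x` supported at `x`, i.e. killed
by every transition map to a strictly larger point. -/
def suppSec {X : Type} [Preorder X] {k : Type} [CommRing k] (J : PSheaf X k) (x : X) :
    Submodule k (J.stalk x) where
  carrier := {v | ∀ (y : X) (h : x < y), J.res h.le v = 0}
  add_mem' := by
    intro a b ha hb y h
    rw [map_add, ha y h, hb y h, add_zero]
  zero_mem' := by
    intro y h
    rw [map_zero]
  smul_mem' := by
    intro c a ha y h
    rw [map_smul, ha y h, smul_zero]

namespace InjSheafAux

variable {X : Type} [PartialOrder X] {k : Type} [Field k]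

open Classical in
noncomputable def Slow (y z : X) : Submodule k k := if y < z then ⊤ else ⊥

open Classical in
noncomputable def Sle (y z : X) : Submodule k k := if y ≤ z then ⊤ else ⊥

lemma Slow_mono {y z z' : X} (h : z ≤ z') : Slow (k := k) y z ≤ Slow y z' := by
  by_cases h1 : y < z
  · unfold Slow; rw [if_pos h1, if_pos (h1.trans_le h)]
  · unfold Slow; rw [if_neg h1]; exact bot_le

lemma Sle_mono {y z z' : X} (h : z ≤ z') : Sle (k := k) y z ≤ Sle y z' := by
  by_cases h1 : y ≤ z
  · unfold Sle; rw [if_pos h1, if_pos (h1.trans h)]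
  · unfold Sle; rw [if_neg h1]; exact bot_le

lemma Slow_le_Sle (y z : X) : Slow (k := k) y z ≤ Sle y z := by
  by_cases h1 : y < z
  · unfold Slow Sle; rw [if_pos h1, if_pos h1.le]
  · unfold Slow; rw [if_neg h1]; exact bot_le

noncomputable def Fsh (y : X) : PSheaf X k where
  stalk z := Slow (k := k) y z
  res h := Submodule.inclusion (Slow_mono h)
  res_refl z := by ext v; rfl
  res_comp hxy hyz := by ext v; rfl

noncomputable def Gsh (y : X) : PSheaf X k where
  stalk z := Sle (k := k) y z
  res h := Submodule.inclusion (Sle_mono h)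
  res_refl z := by ext v; rfl
  res_comp hxy hyz := by ext v; rfl

noncomputable def iota (y : X) : PHom (Fsh (k := k) y) (Gsh y) where
  app z := Submodule.inclusion (Slow_le_Sle y z)
  natural h := by ext v; rfl

end InjSheafAux

namespace InjSheafAux

variable {X : Type} [PartialOrder X] {k : Type} [Field k] (J : PSheaf X k)

lemma mem_Slow {y z : X} (h : y < z) (c : k) : c ∈ Slow (k := k) y z := by
  unfold Slow; rw [if_pos h]; trivial

lemma mem_Sle {y z : X} (h : y ≤ z) (c : k) : c ∈ Sle (k := k) y z := by
  unfold Sle; rw [if_pos h]; trivial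

lemma Slow_val_eq_zero {y z : X} (h : ¬ y < z) (c : Slow (k := k) y z) : (c : k) = 0 := by
  have hS : Slow (k := k) y z = (⊥ : Submodule k k) := by unfold Slow; rw [if_neg h]
  have hc : (c : k) ∈ (⊥ : Submodule k k) := by rw [← hS]; exact c.2
  simpa using hc

open Classical in
noncomputable def fapp (y : X) (u : ∀ z, y < z → J.stalk z) (z : X) :
    (Fsh (k := k) y).stalk z →ₗ[k] J.stalk z :=
  if hz : y < z then
    (LinearMap.toSpanSingleton k _ (u z hz)).comp (Slow (k := k) y z).subtype
  else 0

lemma fapp_apply (y : X) (u : ∀ z, y < z → J.stalk z) {z : X} (hz : y < z)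
    (c : (Fsh (k := k) y).stalk z) :
    fapp J y u z c = (Slow (k := k) y z).subtype c • u z hz := by
  unfold fapp
  rw [dif_pos hz]
  rfl

lemma fapp_neg (y : X) (u : ∀ z, y < z → J.stalk z) {z : X} (hz : ¬ y < z) :
    fapp J y u z = 0 := by
  unfold fapp
  rw [dif_neg hz]

noncomputable def fmap (y : X) (u : ∀ z, y < z → J.stalk z)
    (hu : ∀ z z' (hz : y < z) (h : z ≤ z'), J.res h (u z hz) = u z' (hz.trans_le h)) :
    PHom (Fsh (k := k) y) J where
  app := fapp J y u
  natural {z z'} h := by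
    ext c
    simp only [LinearMap.comp_apply]
    by_cases hz : y < z
    · have hz' : y < z' := hz.trans_le h
      rw [fapp_apply J y u hz c, fapp_apply J y u hz' ((Fsh (k := k) y).res h c),
        map_smul, hu z z' hz h]
      rfl
    · rw [fapp_neg J y u hz]
      have hc : ((Fsh (k := k) y).res h c) = 0 := by
        apply Subtype.ext
        exact Slow_val_eq_zero hz c
      simp [hc]

noncomputable def retr (x : X) : J.stalk x →ₗ[k] suppSec J x :=
  Classical.choose ((suppSec J x).subtype.exists_leftInverse_of_injective
    (Submodule.ker_subtype _))

lemma retr_spec (x : X) (v : suppSec J x) : retr J x (v : J.stalk x) = v := by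
  have h := Classical.choose_spec ((suppSec J x).subtype.exists_leftInverse_of_injective
    (Submodule.ker_subtype _))
  exact LinearMap.congr_fun h v

noncomputable def phi (y : X) :
    J.stalk y →ₗ[k] (∀ x : {x : X // y ≤ x}, suppSec J x.1) :=
  LinearMap.pi fun x => (retr J x.1).comp (J.res x.2)

lemma phi_apply (y : X) (v : J.stalk y) (x : {x : X // y ≤ x}) :
    phi J y v x = retr J x.1 (J.res x.2 v) := rfl

lemma phi_natural (y y' : X) (h : y ≤ y') (v : J.stalk y) (x : {x : X // y' ≤ x}) :
    phi J y' (J.res h v) x = phi J y v ⟨x.1, h.trans x.2⟩ := by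
  rw [phi_apply, phi_apply]
  rw [← LinearMap.comp_apply (J.res x.2) (J.res h), J.res_comp]

lemma phi_bijective [Finite X] (hJ : IsInjectiveSheaf J) (y : X) :
    Function.Bijective (phi J y) := by
  refine wellFounded_gt.induction (C := fun y => Function.Bijective (phi J y)) y ?_
  clear y
  intro y IH
  constructor
  · rw [injective_iff_map_eq_zero]
    intro v hv
    have hsupp : ∀ z (hz : y < z), J.res hz.le v = 0 := by
      intro z hz
      have h0 : phi J z (J.res hz.le v) = 0 := by
        funext x
        rw [phi_natural J y z hz.le v x]
        exact congrFun hv ⟨x.1, hz.le.trans x.2⟩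
      exact (injective_iff_map_eq_zero _).1 (IH z hz).1 _ h0
    have hm : v ∈ suppSec J y := hsupp
    have h1 := congrFun hv ⟨y, le_refl y⟩
    rw [phi_apply, J.res_refl] at h1
    have h2 : retr J y v = 0 := h1
    have h3 : (⟨v, hm⟩ : suppSec J y) = 0 := by
      rw [← retr_spec J y ⟨v, hm⟩]
      exact h2
    exact Subtype.ext_iff.1 h3
  · intro w
    have hex : ∀ z (hz : y < z), ∃ v : J.stalk z,
        phi J z v = fun (x : {x : X // z ≤ x}) => w ⟨x.1, hz.le.trans x.2⟩ :=
      fun z hz => (IH z hz).2 _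
    choose u hu using hex
    have hcompat : ∀ z z' (hz : y < z) (h : z ≤ z'),
        J.res h (u z hz) = u z' (hz.trans_le h) := by
      intro z z' hz h
      apply (IH z' (hz.trans_le h)).1
      funext x
      rw [phi_natural J z z' h (u z hz) x]
      rw [congrFun (hu z hz) ⟨x.1, h.trans x.2⟩]
      rw [congrFun (hu z' (hz.trans_le h)) x]
    obtain ⟨g, hg⟩ := hJ (Fsh (k := k) y) (Gsh (k := k) y) (iota y)
      (fun z => Submodule.inclusion_injective (Slow_le_Sle y z)) (fmap J y u hcompat)
    set v₀ : J.stalk y := g.app y ⟨1, mem_Sle (le_refl y) 1⟩ with hv₀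
    have hres₀ : ∀ z (hz : y < z), J.res hz.le v₀ = u z hz := by
      intro z hz
      have hnat := LinearMap.congr_fun (g.natural hz.le) ⟨1, mem_Sle (le_refl y) 1⟩
      simp only [LinearMap.coe_comp, Function.comp_apply] at hnat
      rw [hv₀]
      refine hnat.trans (?_ : g.app z ((Gsh (k := k) y).res hz.le ⟨1, mem_Sle (le_refl y) 1⟩) = u z hz)
      have he : (Gsh (k := k) y).res hz.le ⟨1, mem_Sle (le_refl y) 1⟩ =
          (iota (k := k) y).app z ⟨1, mem_Slow hz 1⟩ := rfl
      rw [he]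
      refine (LinearMap.congr_fun (hg z) (⟨1, mem_Slow hz 1⟩ : (Fsh (k := k) y).stalk z)).trans ?_
      rw [show (fmap J y u hcompat).app z = fapp J y u z from rfl]
      rw [fapp_apply J y u hz ⟨1, mem_Slow hz 1⟩]
      simp
    set d : suppSec J y := w ⟨y, le_refl y⟩ - retr J y v₀ with hd
    refine ⟨v₀ + (d : J.stalk y), ?_⟩
    funext x
    obtain ⟨x, hx⟩ := x
    rcases eq_or_lt_of_le hx with rfl | hlt
    · rw [phi_apply, J.res_refl]
      show retr J y (v₀ + (d : J.stalk y)) = w ⟨y, hx⟩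
      rw [map_add, retr_spec, hd]
      abel
    · rw [phi_apply]
      have h0 : J.res hx (d : J.stalk y) = 0 := d.2 x hlt
      rw [map_add, h0, add_zero]
      have h1 : J.res hx v₀ = u x hlt := hres₀ x hlt
      rw [h1]
      have h2 := congrFun (hu x hlt) ⟨x, le_refl x⟩
      rw [phi_apply, J.res_refl] at h2
      exact h2

end InjSheafAux

/-- Every injective sheaf `J` of `k`-vector spaces on a finite poset `X` decomposes as
`J ≅ ⊕_{x ∈ X} J(x) ⊗_k k_{C_x}`, where `J(x) = Hom(k_{{x}}, J)` and `k_{C_x}` is the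
constant sheaf on the closure `C_x = {y : y ≤ x}`: stalkwise, `J_y ≅ ⊕_{x ≥ y} J(x)`,
compatibly with the transition maps (which on the right hand side are the canonical
projections). -/
theorem injective_sheaf_decomposition {X : Type} [PartialOrder X] [Finite X]
    {k : Type} [Field k] (J : PSheaf X k) (hJ : IsInjectiveSheaf J) :
    ∃ φ : ∀ y : X, J.stalk y ≃ₗ[k] (∀ x : {x : X // y ≤ x}, suppSec J x.1),
      ∀ (y y' : X) (h : y ≤ y') (v : J.stalk y) (x : {x : X // y' ≤ x}),
        φ y' (J.res h v) x = φ y v ⟨x.1, h.trans x.2⟩ := by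
  refine ⟨fun y => LinearEquiv.ofBijective (InjSheafAux.phi J y)
    (InjSheafAux.phi_bijective J hJ y), ?_⟩
  intro y y' h v x
  simp only [LinearEquiv.ofBijective_apply]
  exact InjSheafAux.phi_natural J y y' h v x
end

section
/- Let X be a finite poset, k a field, x_0 ∈ X a closed point (minimal element), U = X \ {x_0}, and J an injective sheaf of k-vector spaces on X. Then the short exact sequence 0 → J(x_0) ⊗_k k_{{x_0}} → J → j_* (J|_U) → 0 splits, where J(x_0) = Hom(k_{{x_0}}, J) and j: U ↪ X is the open inclusion. -/
/-- Let `X` be a finite poset, `x₀` a closed point (minimal element), `U = X \ {x₀}`, and `J`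
an injective sheaf of `k`-vector spaces on `X`. The exact sequence
`0 → J(x₀) ⊗ k_{{x₀}} → J → j_*(J|_U) → 0` splits: equivalently, there is an idempotent
endomorphism of `J` which is a projection onto the subsheaf `J(x₀) ⊗ k_{{x₀}}`
(the subsheaf with stalk `J(x₀) = Hom(k_{{x₀}}, J)` at `x₀` and `0` elsewhere). -/
theorem injective_sheaf_skyscraper_splits {X : Type} [PartialOrder X] [Finite X]
    {k : Type} [Field k] (J : PSheaf X k) (hJ : IsInjectiveSheaf J)
    (x₀ : X) (hx₀ : ∀ y : X, y ≤ x₀ → y = x₀) :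
    ∃ e : PHom J J,
      (∀ x : X, x ≠ x₀ → e.app x = 0) ∧
      (∀ v : J.stalk x₀, e.app x₀ v ∈ suppSec J x₀) ∧
      (∀ v ∈ suppSec J x₀, e.app x₀ v = v) := by

  classical
  obtain ⟨q, hq⟩ := Submodule.exists_isCompl (suppSec J x₀)
  set P : J.stalk x₀ →ₗ[k] J.stalk x₀ :=
    (suppSec J x₀).subtype.comp ((suppSec J x₀).projectionOnto q hq) with hP
  have hPmem : ∀ v : J.stalk x₀, P v ∈ suppSec J x₀ := fun v =>
    ((suppSec J x₀).linearProjOfIsCompl q hq v).2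
  have hPfix : ∀ v ∈ suppSec J x₀, P v = v := by
    intro v hv
    have := Submodule.linearProjOfIsCompl_apply_left hq ⟨v, hv⟩
    simp [hP, this]
  let app : ∀ x : X, J.stalk x →ₗ[k] J.stalk x :=
    fun x => if h : x = x₀ then h.symm ▸ P else 0
  have happ0 : ∀ x : X, x ≠ x₀ → app x = 0 := fun x h => dif_neg h
  have happx₀ : app x₀ = P := dif_pos rfl
  have hnat : ∀ {x y : X} (h : x ≤ y), (J.res h).comp (app x) = (app y).comp (J.res h) := by
    intro x y h
    by_cases hx : x = x₀
    · by_cases hy : y = x₀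
      · rcases hx.symm with rfl; rcases hy.symm with rfl
        have hid : J.res h = LinearMap.id := J.res_refl x₀
        ext v
        simp [hid]
      · rcases hx.symm with rfl
        ext v
        have h2 : x₀ < y := lt_of_le_of_ne h (fun he => hy he.symm)
        have hm : J.res h (P v) = 0 := by
          have := hPmem v y h2
          exact this
        simp [happx₀, happ0 y hy, hm]
    · have hy : y ≠ x₀ := fun he => hx (hx₀ x (he ▸ h))
      ext v
      simp [happ0 x hx, happ0 y hy]
  refine ⟨⟨app, hnat⟩, happ0, ?_, ?_⟩
  · intro v
    show app x₀ v ∈ suppSec J x₀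
    rw [happx₀]
    exact hPmem v
  · intro v hv
    show app x₀ v = v
    rw [happx₀]
    exact hPfix v hv
end
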